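/- arXiv:1204.3139 — 2 statements merged into one kernel-verified Lean document; each statement's English description precedes it below -/
import Mathlib

section
/- Let n ≥ 2 be an integer. Then SL(n,ℚ) has no proper subgroup of finite index: every subgroup H of SL(n,ℚ) with finite index satisfies H = SL(n,ℚ). -/
open Matrix

namespace SLnQAux

/-- The six-transvection product realizing `diag(a, a⁻¹)`. -/
theorem sixT {m : Type*} [DecidableEq m] [Fintype m] (i j : m) (hij : i ≠ j) (a : ℚ)
    (ha : a ≠ 0) :
    transvection i j a * transvection j i (-a⁻¹) * transvection i j a *
      transvection i j (-1) * transvection j i 1 * transvection i j (-1) =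
    diagonal (fun x => if x = i then a else if x = j then a⁻¹ else 1) := by
  have hji : j ≠ i := hij.symm
  ext x y
  by_cases hyi : y = i <;> by_cases hyj : y = j <;> by_cases hxi : x = i <;> by_cases hxj : x = j <;>
  first
  | exact absurd (hyi.symm.trans hyj) hij
  | exact absurd (hxi.symm.trans hxj) hij
  | (simp only [hyi, hyj, hxi, hxj, ne_eq, hij, hji, mul_transvection_apply_same,
        mul_transvection_apply_of_ne, not_false_eq_true, diagonal_apply]
     try simp [transvection, Matrix.one_apply, Matrix.add_apply, Matrix.single, hij, hji,
       hxi, hxj, hyi, hyj]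
     try simp [@eq_comm _ i, @eq_comm _ j, hxi, hxj, hyi, hyj]
     try field_simp
     try ring)

variable {n : ℕ}

/-- A transvection as an element of `SL(n, ℚ)`. -/
def slT {i j : Fin n} (hij : i ≠ j) (c : ℚ) : Matrix.SpecialLinearGroup (Fin n) ℚ :=
  ⟨Matrix.transvection i j c, Matrix.det_transvection_of_ne i j hij c⟩

@[simp] theorem slT_coe {i j : Fin n} (hij : i ≠ j) (c : ℚ) :
    (slT hij c : Matrix (Fin n) (Fin n) ℚ) = Matrix.transvection i j c := rfl

theorem slT_mul {i j : Fin n} (hij : i ≠ j) (c d : ℚ) :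
    slT hij c * slT hij d = slT hij (c + d) :=
  Subtype.ext (by simp [Matrix.transvection_mul_transvection_same _ _ hij])

theorem slT_pow {i j : Fin n} (hij : i ≠ j) (c : ℚ) (m : ℕ) :
    (slT hij c) ^ m = slT hij (m * c) := by
  induction m with
  | zero => exact Subtype.ext (by rw [pow_zero]; simp [slT])
  | succ k ih =>
      rw [pow_succ, ih, slT_mul]
      congr 1
      push_cast
      ring

/-- The set of transvections in `SL(n, ℚ)`. -/
def TS (n : ℕ) : Set (Matrix.SpecialLinearGroup (Fin n) ℚ) :=
  {g | ∃ (i j : Fin n) (hij : i ≠ j) (c : ℚ), g = slT hij c}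

theorem slT_mem_closure {i j : Fin n} (hij : i ≠ j) (c : ℚ) :
    slT hij c ∈ Subgroup.closure (TS n) :=
  Subgroup.subset_closure ⟨i, j, hij, c, rfl⟩

theorem list_prod_mem_closure (L : List (TransvectionStruct (Fin n) ℚ)) :
    ∃ g ∈ Subgroup.closure (TS n),
      (g : Matrix (Fin n) (Fin n) ℚ) = (L.map TransvectionStruct.toMatrix).prod := by
  induction L with
  | nil => exact ⟨1, one_mem _, by simp⟩
  | cons t L ih =>
      obtain ⟨g, hgT, hg⟩ := ih
      refine ⟨slT t.hij t.c * g, mul_mem (slT_mem_closure t.hij t.c) hgT, ?_⟩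
      simp [hg, TransvectionStruct.toMatrix]

theorem diag_pair_mem_closure {i j : Fin n} (hij : i ≠ j) (a : ℚ) (ha : a ≠ 0) :
    ∃ g ∈ Subgroup.closure (TS n),
      (g : Matrix (Fin n) (Fin n) ℚ) =
        diagonal (fun x => if x = i then a else if x = j then a⁻¹ else 1) := by
  have hji : j ≠ i := hij.symm
  refine ⟨slT hij a * slT hji (-a⁻¹) * slT hij a * slT hij (-1) * slT hji 1 * slT hij (-1),
    ?_, ?_⟩
  · exact mul_mem (mul_mem (mul_mem (mul_mem (mul_mem (slT_mem_closure hij a)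
      (slT_mem_closure hji (-a⁻¹))) (slT_mem_closure hij a)) (slT_mem_closure hij (-1)))
      (slT_mem_closure hji 1)) (slT_mem_closure hij (-1))
  · simpa using sixT i j hij a ha

theorem diagonal_mem_closure_aux (k : ℕ) :
    ∀ D : Fin n → ℚ, (∏ i, D i) = 1 → (∀ i : Fin n, k ≤ (i : ℕ) → D i = 1) →
      ∃ g ∈ Subgroup.closure (TS n), (g : Matrix (Fin n) (Fin n) ℚ) = diagonal D := by
  induction k with
  | zero =>
      intro D _ hD
      have : D = fun _ => 1 := funext fun i => hD i (Nat.zero_le _)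
      exact ⟨1, one_mem _, by simp [this]⟩
  | succ k ih =>
      intro D hprod hD
      by_cases hk : n ≤ k
      · exact ih D hprod fun i hi => absurd (lt_of_le_of_lt hi i.2) (by omega)
      push_neg at hk
      match k, hk, ih, hD with
      | 0, hk, ih, hD =>
          have i0 : Fin n := ⟨0, hk⟩
          have hall : ∀ i : Fin n, D i = 1 := by
            intro i
            rcases Nat.eq_zero_or_pos (i : ℕ) with h0 | h0
            · have hsingle : ∏ j, D j = D i := by
                refine Finset.prod_eq_single i (fun b _ hb => hD b ?_) (by simp)
                rcases Nat.eq_zero_or_pos (b : ℕ) with hb0 | hb0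
                · exact absurd (Fin.ext (hb0.trans h0.symm)) hb
                · exact hb0
              rw [hsingle] at hprod
              exact hprod
            · exact hD i h0
          have : D = fun _ => 1 := funext hall
          exact ⟨1, one_mem _, by simp [this]⟩
      | k' + 1, hk, ih, hD =>
          set ik : Fin n := ⟨k' + 1, hk⟩ with hik
          set ik' : Fin n := ⟨k', by omega⟩ with hik'
          have hne : ik ≠ ik' := by
            intro h
            have h2 := congrArg Fin.val h
            simp only [hik, hik', Fin.val_mk] at h2
            omega
          have haD : ∀ i, D i ≠ 0 := by
            have := hprod
            intro i hzero
            have : (∏ j, D j) = 0 := Finset.prod_eq_zero (Finset.mem_univ i) hzero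
            rw [hprod] at this
            exact one_ne_zero this
          set a : ℚ := D ik with haa
          have ha : a ≠ 0 := haD ik
          set D' : Fin n → ℚ :=
            Function.update (Function.update D ik 1) ik' (D ik' * a) with hD'
          have hD'ik : D' ik = 1 := by
            rw [hD', Function.update_of_ne hne, Function.update_self]
          have hD'ik' : D' ik' = D ik' * a := by
            rw [hD', Function.update_self]
          have hD'other : ∀ i, i ≠ ik → i ≠ ik' → D' i = D i := by
            intro i h1 h2
            rw [hD', Function.update_of_ne h2, Function.update_of_ne h1]
          have hprod' : (∏ i, D' i) = 1 := by
            rw [← hprod]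
            rw [Finset.prod_eq_mul_prod_sdiff_singleton_of_mem (Finset.mem_univ ik') D',
              Finset.prod_eq_mul_prod_sdiff_singleton_of_mem (Finset.mem_univ ik') D]
            have hikmem : ik ∈ Finset.univ \ {ik'} := by simp [hne]
            rw [Finset.prod_eq_mul_prod_sdiff_singleton_of_mem hikmem D',
              Finset.prod_eq_mul_prod_sdiff_singleton_of_mem hikmem D]
            have hrest : ∏ i ∈ (Finset.univ \ {ik'}) \ {ik}, D' i =
                ∏ i ∈ (Finset.univ \ {ik'}) \ {ik}, D i := by
              refine Finset.prod_congr rfl fun i hi => ?_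
              simp only [Finset.mem_sdiff, Finset.mem_singleton] at hi
              exact hD'other i hi.2 hi.1.2
            rw [hrest, hD'ik, hD'ik']
            ring
          have hD1' : ∀ i : Fin n, k' + 1 ≤ (i : ℕ) → D' i = 1 := by
            intro i hi
            have hii' : i ≠ ik' := by
              intro h
              rw [h] at hi
              simp only [hik', Fin.val_mk] at hi
              omega
            by_cases hiik : i = ik
            · rw [hiik]; exact hD'ik
            · rw [hD'other i hiik hii']
              refine hD i ?_
              have : (i : ℕ) ≠ k' + 1 := fun h => hiik (Fin.ext h)
              omega
          obtain ⟨g', hg'T, hg'⟩ := ih D' hprod' hD1'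
          obtain ⟨gE, hgET, hgE⟩ := diag_pair_mem_closure hne a ha
          refine ⟨g' * gE, mul_mem hg'T hgET, ?_⟩
          rw [Matrix.SpecialLinearGroup.coe_mul, hg', hgE, diagonal_mul_diagonal]
          refine congrArg Matrix.diagonal (funext fun x => ?_)
          by_cases hx : x = ik
          · rw [hx, hD'ik, if_pos rfl, one_mul, haa]
          · by_cases hx' : x = ik'
            · rw [hx', hD'ik', if_neg hne.symm, if_pos rfl]
              field_simp
            · rw [hD'other x hx hx', if_neg hx, if_neg hx', mul_one]

theorem closure_TS_eq_top : Subgroup.closure (TS n) = ⊤ := by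
  rw [Subgroup.eq_top_iff']
  intro g
  obtain ⟨L, L', D, hdec⟩ :=
    Pivot.exists_list_transvec_mul_diagonal_mul_list_transvec
      (g : Matrix (Fin n) (Fin n) ℚ)
  have hdetg : det (g : Matrix (Fin n) (Fin n) ℚ) = 1 := g.2
  have hdetD : (∏ i, D i) = 1 := by
    have := hdetg
    rw [hdec, det_mul, det_mul, TransvectionStruct.det_toMatrix_prod,
      TransvectionStruct.det_toMatrix_prod, det_diagonal] at this
    simpa using this
  obtain ⟨gL, hgLT, hgL⟩ := list_prod_mem_closure L
  obtain ⟨gR, hgRT, hgR⟩ := list_prod_mem_closure L'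
  obtain ⟨gD, hgDT, hgD⟩ := diagonal_mem_closure_aux n D hdetD
    (fun i hi => absurd i.2 (by omega))
  have : g = gL * gD * gR := by
    apply Subtype.ext
    rw [Matrix.SpecialLinearGroup.coe_mul, Matrix.SpecialLinearGroup.coe_mul,
      hgL, hgD, hgR, ← hdec]
  rw [this]
  exact mul_mem (mul_mem hgLT hgDT) hgRT

end SLnQAux

/-- `SL(n,ℚ)` (`n ≥ 2`) has no proper subgroup of finite index. -/
theorem sl_n_Q_no_proper_finite_index_subgroup (n : ℕ) (hn : 2 ≤ n)
    (H : Subgroup (Matrix.SpecialLinearGroup (Fin n) ℚ)) (hH : H.FiniteIndex) :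
    H = ⊤ := by
  haveI := hH
  set N := H.normalCore with hN
  haveI : N.FiniteIndex := Subgroup.finiteIndex_normalCore H
  have hTS : SLnQAux.TS n ⊆ (N : Set _) := by
    rintro g ⟨i, j, hij, c, rfl⟩
    have hm : (N.index : ℚ) ≠ 0 := by
      exact_mod_cast Subgroup.FiniteIndex.index_ne_zero (H := N)
    have : SLnQAux.slT hij c = (SLnQAux.slT hij (c / N.index)) ^ N.index := by
      rw [SLnQAux.slT_pow]
      congr 1
      field_simp
    rw [this]
    exact Subgroup.pow_index_mem N _
  have hle : Subgroup.closure (SLnQAux.TS n) ≤ N := (Subgroup.closure_le N).mpr hTS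
  rw [SLnQAux.closure_TS_eq_top] at hle
  have : N = ⊤ := top_le_iff.mp hle
  have hNH : N ≤ H := Subgroup.normalCore_le H
  rw [this] at hNH
  exact top_le_iff.mp hNH
end

section
/- Let n ≥ 2 be an integer. The diagonal embedding of SL(n,ℤ) into the product ∏_p SL(n,ℤ_p), taken over all prime numbers p, has dense image, where each SL(n,ℤ_p) carries the topology induced from the p-adic topology on the ring ℤ_p of p-adic integers and the product carries the product topology. -/
open Matrix Finset

private lemma exists_coprime_shift (a g : ℤ) (m : ℕ) (hm : m ≠ 0)
    (h : ∀ q : ℕ, q.Prime → (q : ℤ) ∣ a → (q : ℤ) ∣ g → ¬ (q ∣ m)) :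
    ∃ t : ℤ, IsCoprime (a + t * g) (m : ℤ) := by
  classical
  set T : ℕ := (m.primeFactors.filter (fun q : ℕ => ¬ ((q : ℤ) ∣ a) ∧ ¬ ((q : ℤ) ∣ g))).prod id with hT
  refine ⟨(T : ℤ), ?_⟩
  rw [Int.isCoprime_iff_gcd_eq_one]
  by_contra hne
  obtain ⟨r, hr, hrd⟩ := Nat.exists_prime_and_dvd hne
  have h1 : (r : ℤ) ∣ a + (T : ℤ) * g :=
    (Int.natCast_dvd_natCast.mpr hrd).trans (Int.gcd_dvd_left _ _)
  have h2 : r ∣ m :=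
    Int.natCast_dvd_natCast.mp ((Int.natCast_dvd_natCast.mpr hrd).trans (Int.gcd_dvd_right _ _))
  by_cases ha : (r : ℤ) ∣ a
  · have hg : ¬ (r : ℤ) ∣ g := fun hg => h r hr ha hg h2
    have hrT : ¬ r ∣ T := by
      intro hdvd
      obtain ⟨s, hs, hrs⟩ := (hr.prime.dvd_finset_prod_iff id).mp hdvd
      rw [Finset.mem_filter] at hs
      have hsp : s.Prime := Nat.prime_of_mem_primeFactors hs.1
      exact hs.2.1 (((Nat.prime_dvd_prime_iff_eq hr hsp).mp hrs) ▸ ha)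
    have hTg : (r : ℤ) ∣ (T : ℤ) * g := (dvd_add_right ha).mp h1
    rcases (Nat.prime_iff_prime_int.mp hr).dvd_mul.mp hTg with h' | h'
    · exact hrT (Int.natCast_dvd_natCast.mp h')
    · exact hg h'
  · by_cases hg : (r : ℤ) ∣ g
    · refine ha ?_
      have := dvd_sub h1 (dvd_mul_of_dvd_right hg (T : ℤ))
      simpa using this
    · have hrT : r ∣ T := Finset.dvd_prod_of_mem _
        (Finset.mem_filter.mpr ⟨Nat.mem_primeFactors.mpr ⟨hr, h2, hm⟩, ha, hg⟩)
      have : (r : ℤ) ∣ (T : ℤ) * g := dvd_mul_of_dvd_left (Int.natCast_dvd_natCast.mpr hrT) g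
      refine ha ?_
      have := dvd_sub h1 this
      simpa using this

private lemma crt_primes (K : ℕ) (F : Finset Nat.Primes)
    (b : (p : Nat.Primes) → ZMod ((p : ℕ) ^ K)) :
    ∃ a : ℤ, ∀ p ∈ F, (a : ZMod ((p : ℕ) ^ K)) = b p := by
  classical
  induction F using Finset.induction with
  | empty => exact ⟨0, fun p hp => absurd hp (Finset.notMem_empty p)⟩
  | @insert q F hq ih =>
    obtain ⟨a₀, ha₀⟩ := ih
    set M : ℕ := ∏ p ∈ F, (p : ℕ) ^ K with hM
    haveI : NeZero ((q : ℕ) ^ K) := ⟨pow_ne_zero K q.2.pos.ne'⟩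
    have hcop : M.Coprime ((q : ℕ) ^ K) := by
      apply Nat.Coprime.prod_left
      intro p hp
      have hpq : (p : ℕ) ≠ (q : ℕ) := by
        intro hpq'
        exact hq ((Nat.Primes.coe_nat_injective hpq' : p = q) ▸ hp)
      exact Nat.Coprime.pow _ _ ((Nat.coprime_primes p.2 q.2).mpr hpq)
    have hunit : IsUnit ((M : ZMod ((q : ℕ) ^ K))) := (ZMod.isUnit_iff_coprime M _).mpr hcop
    obtain ⟨u, hu⟩ := hunit
    set t : ZMod ((q : ℕ) ^ K) := ↑u⁻¹ * (b q - (a₀ : ZMod ((q : ℕ) ^ K))) with ht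
    refine ⟨a₀ + (M : ℤ) * (t.val : ℤ), fun p hp => ?_⟩
    rcases Finset.mem_insert.mp hp with rfl | hpF
    · push_cast
      rw [ZMod.natCast_zmod_val]
      rw [ht, ← mul_assoc]
      have : ((M : ZMod ((p : ℕ) ^ K))) * ↑u⁻¹ = 1 := by
        rw [← hu, Units.mul_inv]
      rw [this, one_mul]
      ring
    · have hMz : ((M : ZMod ((p : ℕ) ^ K))) = 0 := by
        haveI : NeZero ((p : ℕ) ^ K) := ⟨pow_ne_zero K p.2.pos.ne'⟩
        rw [ZMod.natCast_eq_zero_iff]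
        exact Finset.dvd_prod_of_mem _ hpF
      push_cast
      rw [hMz, zero_mul, add_zero]
      exact ha₀ p hpF


-- transfer liftability along left multiplication by a det-1 matrix
private lemma lift_transfer {N m : ℕ} (M A : Matrix (Fin N) (Fin N) ℤ) (hM : M.det = 1)
    (h : ∃ B : Matrix (Fin N) (Fin N) ℤ, B.det = 1 ∧
      B.map (Int.cast : ℤ → ZMod m) = (M * A).map (Int.cast : ℤ → ZMod m)) :
    ∃ B : Matrix (Fin N) (Fin N) ℤ, B.det = 1 ∧
      B.map (Int.cast : ℤ → ZMod m) = A.map (Int.cast : ℤ → ZMod m) := by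
  obtain ⟨B, hB1, hB2⟩ := h
  refine ⟨M.adjugate * B, ?_, ?_⟩
  · rw [Matrix.det_mul, Matrix.det_adjugate, hM, hB1, one_pow, one_mul]
  · have hadj : M.adjugate * M = 1 := by rw [Matrix.adjugate_mul, hM, one_smul]
    have hcast : ∀ X Y : Matrix (Fin N) (Fin N) ℤ,
        (X * Y).map (Int.cast : ℤ → ZMod m) =
          X.map (Int.cast : ℤ → ZMod m) * Y.map (Int.cast : ℤ → ZMod m) :=
      fun X Y => Matrix.map_mul (f := Int.castRingHom (ZMod m))
    rw [hcast, hB2, hcast, ← mul_assoc, ← hcast, hadj]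
    have : (1 : Matrix (Fin N) (Fin N) ℤ).map (Int.cast : ℤ → ZMod m) = 1 := by
      ext i j
      by_cases hij : i = j <;> simp [Matrix.map_apply, Matrix.one_apply, hij]
    rw [this, one_mul]

private lemma exists_coprime_shift' : True := trivial

private lemma lift_det_one (m : ℕ) (hm : m ≠ 0) :
    ∀ (N : ℕ) (A : Matrix (Fin N) (Fin N) ℤ), ((A.det : ℤ) : ZMod m) = 1 →
    ∃ B : Matrix (Fin N) (Fin N) ℤ, B.det = 1 ∧
      B.map (Int.cast : ℤ → ZMod m) = A.map (Int.cast : ℤ → ZMod m) := by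
  intro N
  induction N with
  | zero =>
    intro A _
    exact ⟨A, Matrix.det_fin_zero, rfl⟩
  | succ k IH =>
    cases k with
    | zero =>
      intro A hdet
      rw [Matrix.det_fin_one] at hdet
      refine ⟨1, Matrix.det_one, ?_⟩
      ext i j
      have hi : i = 0 := Fin.ext (by omega)
      have hj : j = 0 := Fin.ext (by omega)
      rw [hi, hj]
      simp [Matrix.map_apply, Matrix.one_apply, hdet.symm]
    | succ k' =>
      intro A hdet
      classical
      -- cofactor expansion along column 0
      set c : Fin (k' + 2) → ℤ :=
        fun i => (-1) ^ (i : ℕ) * (A.submatrix i.succAbove Fin.succ).det with hc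
      have hdexp : A.det = ∑ i, A i 0 * c i := by
        rw [Matrix.det_succ_column_zero]
        exact Finset.sum_congr rfl fun i _ => by rw [hc]; ring
      set q : ℤ := ∑ i ∈ Finset.univ.erase (0 : Fin (k' + 2)), A i 0 * c i with hqdef
      have hdq : A.det = A 0 0 * c 0 + q := by
        rw [hdexp, ← Finset.add_sum_erase _ _ (Finset.mem_univ (0 : Fin (k' + 2)))]
      -- find t making the corner coprime to m
      have hcs : ∀ r : ℕ, r.Prime → (r : ℤ) ∣ A 0 0 → (r : ℤ) ∣ q → ¬ (r ∣ m) := by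
        intro r hr h1 h2 hrm
        have hrd : (r : ℤ) ∣ A.det := by
          rw [hdq]; exact dvd_add (h1.mul_right _) h2
        have hmd : ((m : ℤ)) ∣ (A.det - 1) := by
          have : ((A.det - 1 : ℤ) : ZMod m) = 0 := by push_cast [hdet]; ring
          exact (ZMod.intCast_zmod_eq_zero_iff_dvd _ m).mp this
        have hr1 : (r : ℤ) ∣ 1 := by
          have := dvd_sub hrd ((Int.natCast_dvd_natCast.mpr hrm).trans hmd)
          simpa using this
        have : r ∣ 1 := Int.natCast_dvd_natCast.mp (by simpa using hr1)
        exact hr.ne_one (Nat.dvd_one.mp this)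
      obtain ⟨t, ht⟩ := exists_coprime_shift (A 0 0) q m hm hcs
      set α : ℤ := A 0 0 + t * q with hα
      obtain ⟨u, v, huv⟩ := ht
      -- E₁ : add t * c l * (row l) to row 0
      set E₁ : Matrix (Fin (k' + 2)) (Fin (k' + 2)) ℤ :=
        Matrix.of fun i j => if i = j then 1 else if i = 0 then t * c j else 0 with hE₁
      have hE₁det : E₁.det = 1 := by
        rw [Matrix.det_of_upperTriangular]
        · exact Finset.prod_eq_one fun i _ => by simp [hE₁]
        · intro i j hji
          have h1 : ¬ (i = j) := by exact fun h => absurd hji (h ▸ lt_irrefl _)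
          have h2 : ¬ (i = 0) := by
            intro h; rw [h] at hji; exact absurd hji (Fin.not_lt_zero (id j))
          simp [hE₁, h1, h2]
      set A' : Matrix (Fin (k' + 2)) (Fin (k' + 2)) ℤ := E₁ * A with hA'
      have hA'row : ∀ i, i ≠ 0 → ∀ j, A' i j = A i j := by
        intro i hi j
        rw [hA', Matrix.mul_apply]
        rw [Finset.sum_eq_single i (fun l _ hl => by simp [hE₁, Ne.symm hl, hi])
          (fun h => absurd (Finset.mem_univ i) h)]
        simp [hE₁]
      have hA'00 : A' 0 0 = α := by
        rw [hA', Matrix.mul_apply,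
          ← Finset.add_sum_erase _ _ (Finset.mem_univ (0 : Fin (k' + 2)))]
        have h1 : E₁ 0 0 * A 0 0 = A 0 0 := by simp [hE₁]
        have h2 : ∀ l ∈ Finset.univ.erase (0 : Fin (k' + 2)),
            E₁ 0 l * A l 0 = t * (A l 0 * c l) := by
          intro l hl
          have hl0 : l ≠ 0 := (Finset.mem_erase.mp hl).1
          have : E₁ 0 l = t * c l := by simp [hE₁, Ne.symm hl0]
          rw [this]; ring
        rw [h1, Finset.sum_congr rfl h2, ← Finset.mul_sum, hα, hqdef]
      -- E₂ : clear column 0 below the corner (mod m)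
      set E₂ : Matrix (Fin (k' + 2)) (Fin (k' + 2)) ℤ :=
        Matrix.of fun i j => if i = j then 1 else if j = 0 then -(u * A' i 0) else 0 with hE₂
      have hE₂det : E₂.det = 1 := by
        rw [Matrix.det_of_lowerTriangular]
        · exact Finset.prod_eq_one fun i _ => by simp [hE₂]
        · intro i j hji
          have hji' : i < j := hji
          have h1 : ¬ (i = j) := ne_of_lt hji'
          have h2 : ¬ (j = 0) := by
            intro h; rw [h] at hji'; exact absurd hji' (Fin.not_lt_zero (id i))
          simp [hE₂, h1, h2]
      set A'' : Matrix (Fin (k' + 2)) (Fin (k' + 2)) ℤ := E₂ * A' with hA''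
      have hA''0 : ∀ j, A'' 0 j = A' 0 j := by
        intro j
        rw [hA'', Matrix.mul_apply]
        rw [Finset.sum_eq_single 0 (fun l _ hl => by simp [hE₂, Ne.symm hl, hl])
          (fun h => absurd (Finset.mem_univ _) h)]
        simp [hE₂]
      have hA''i : ∀ i, i ≠ 0 → ∀ j, A'' i j = A' i j - u * A' i 0 * A' 0 j := by
        intro i hi j
        rw [hA'', Matrix.mul_apply,
          ← Finset.add_sum_erase _ _ (Finset.mem_univ (0 : Fin (k' + 2)))]
        have h0 : E₂ i 0 * A' 0 j = -(u * A' i 0) * A' 0 j := by simp [hE₂, hi]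
        rw [h0, Finset.sum_eq_single_of_mem i (Finset.mem_erase.mpr ⟨hi, Finset.mem_univ i⟩)
          (fun l hl hli => by
            have hl0 : l ≠ 0 := (Finset.mem_erase.mp hl).1
            simp [hE₂, Ne.symm hli, hl0])]
        have : E₂ i i = 1 := by simp [hE₂]
        rw [this]; ring
      -- facts mod m about A''
      have h10 : (1 : Fin (k' + 2)) ≠ 0 := by simp [Fin.ext_iff]
      have h1ua : (1 : ℤ) - u * α = v * m := by linarith [huv]
      have hA''col : ∀ i, i ≠ 0 → ((A'' i 0 : ℤ) : ZMod m) = 0 := by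
        intro i hi
        have : A'' i 0 = A' i 0 * (v * m) := by
          rw [hA''i i hi 0, hA'00, ← h1ua]; ring
        rw [this]
        push_cast [ZMod.natCast_self]
        ring
      have hA''00 : A'' 0 0 = α := by rw [hA''0 0, hA'00]
      -- W : the 2x2 block [[u, -v],[m, α]] in coordinates {0,1}, identity elsewhere
      set W : Matrix (Fin (k' + 2)) (Fin (k' + 2)) ℤ :=
        Matrix.of fun i j =>
          if i = 0 then (if j = 0 then u else if j = 1 then -v else 0)
          else if i = 1 then (if j = 0 then (m : ℤ) else if j = 1 then α else 0)
          else if i = j then 1 else 0 with hW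
      have hWdet : W.det = 1 := by
        rw [Matrix.det_succ_column_zero,
          ← Finset.add_sum_erase _ _ (Finset.mem_univ (0 : Fin (k' + 2))),
          ← Finset.add_sum_erase _ _
            (Finset.mem_erase.mpr ⟨h10, Finset.mem_univ (1 : Fin (k' + 2))⟩)]
        have hrest : ∀ l ∈ (Finset.univ.erase (0 : Fin (k' + 2))).erase 1,
            (-1) ^ (l : ℕ) * W l 0 * ((W.submatrix l.succAbove Fin.succ).det) = 0 := by
          intro l hl
          have hl1 : l ≠ 1 := (Finset.mem_erase.mp hl).1
          have hl0 : l ≠ 0 := (Finset.mem_erase.mp (Finset.mem_erase.mp hl).2).1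
          have : W l 0 = 0 := by simp [hW, hl0, hl1]
          rw [this]; ring
        rw [Finset.sum_eq_zero hrest, add_zero]
        have hm0 : (W.submatrix (Fin.succAbove (0 : Fin (k' + 2))) Fin.succ) =
            Matrix.diagonal (fun r : Fin (k' + 1) => if r = 0 then α else 1) := by
          ext r s
          rw [Matrix.submatrix_apply, Fin.succAbove_zero]
          rcases Fin.eq_zero_or_eq_succ r with rfl | ⟨r', rfl⟩
          · rw [Fin.succ_zero_eq_one]
            rcases Fin.eq_zero_or_eq_succ s with rfl | ⟨s', rfl⟩
            · rw [Fin.succ_zero_eq_one]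
              simp [hW, Matrix.diagonal_apply, h10]
            · have hs0 : Fin.succ (Fin.succ s') ≠ 0 := Fin.succ_ne_zero _
              have hs1 : Fin.succ (Fin.succ s') ≠ 1 := by
                simp only [ne_eq, Fin.ext_iff, Fin.val_succ, Fin.val_one]
                omega
              simp [hW, Matrix.diagonal_apply, h10, hs0, hs1, Fin.succ_ne_zero, (Fin.succ_ne_zero s').symm]
          · have hr0 : Fin.succ (Fin.succ r') ≠ 0 := Fin.succ_ne_zero _
            have hr1 : Fin.succ (Fin.succ r') ≠ 1 := by
              simp only [ne_eq, Fin.ext_iff, Fin.val_succ, Fin.val_one]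
              omega
            rcases Fin.eq_zero_or_eq_succ s with rfl | ⟨s', rfl⟩
            · rw [Fin.succ_zero_eq_one]
              simp [hW, Matrix.diagonal_apply, hr0, hr1, Fin.succ_ne_zero,
                (Fin.succ_ne_zero r').symm]
            · simp [hW, Matrix.diagonal_apply, hr0, hr1, Fin.succ_inj, Fin.succ_ne_zero]
        have hm1 : (W.submatrix (Fin.succAbove (1 : Fin (k' + 2))) Fin.succ) =
            Matrix.diagonal (fun r : Fin (k' + 1) => if r = 0 then -v else 1) := by
          ext r s
          rw [Matrix.submatrix_apply]
          rcases Fin.eq_zero_or_eq_succ r with rfl | ⟨r', rfl⟩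
          · have hsa : (1 : Fin (k' + 2)).succAbove 0 = 0 := by
              rw [Fin.succAbove_of_castSucc_lt]
              · rfl
              · simp [Fin.lt_def]
            rw [hsa]
            rcases Fin.eq_zero_or_eq_succ s with rfl | ⟨s', rfl⟩
            · rw [Fin.succ_zero_eq_one]
              simp [hW, Matrix.diagonal_apply]
            · have hs0 : Fin.succ (Fin.succ s') ≠ 0 := Fin.succ_ne_zero _
              have hs1 : Fin.succ (Fin.succ s') ≠ 1 := by
                simp only [ne_eq, Fin.ext_iff, Fin.val_succ, Fin.val_one]
                omega
              simp [hW, Matrix.diagonal_apply, hs0, hs1, Fin.succ_ne_zero, (Fin.succ_ne_zero s').symm]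
          · have hsa : (1 : Fin (k' + 2)).succAbove (Fin.succ r') = Fin.succ (Fin.succ r') := by
              rw [Fin.succAbove_of_le_castSucc]
              simp [Fin.le_def, Fin.val_one]
            rw [hsa]
            have hr0 : Fin.succ (Fin.succ r') ≠ 0 := Fin.succ_ne_zero _
            have hr1 : Fin.succ (Fin.succ r') ≠ 1 := by
              simp only [ne_eq, Fin.ext_iff, Fin.val_succ, Fin.val_one]
              omega
            rcases Fin.eq_zero_or_eq_succ s with rfl | ⟨s', rfl⟩
            · rw [Fin.succ_zero_eq_one]
              simp [hW, Matrix.diagonal_apply, hr0, hr1, Fin.succ_ne_zero, (Fin.succ_ne_zero r').symm]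
            · simp [hW, Matrix.diagonal_apply, hr0, hr1, Fin.succ_inj, Fin.succ_ne_zero]
        rw [hm0, hm1, Matrix.det_diagonal, Matrix.det_diagonal]
        have hp0 : (∏ r : Fin (k' + 1), (if r = 0 then α else 1)) = α :=
          Finset.prod_eq_single 0 (fun r _ hr => by simp [hr]) (by simp)
        have hp1 : (∏ r : Fin (k' + 1), (if r = 0 then -v else 1)) = -v :=
          Finset.prod_eq_single 0 (fun r _ hr => by simp [hr]) (by simp)
        rw [hp0, hp1]
        have hW00 : W 0 0 = u := by simp [hW]
        have hW10 : W 1 0 = (m : ℤ) := by simp [hW, h10]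
        rw [hW00, hW10]
        rw [show ((0 : Fin (k' + 2)) : ℕ) = 0 from rfl,
          show ((1 : Fin (k' + 2)) : ℕ) = 1 from by simp [Fin.val_one]]
        linear_combination huv
      set A3 : Matrix (Fin (k' + 2)) (Fin (k' + 2)) ℤ := W * A'' with hA3
      have hA3row : ∀ i : Fin (k' + 2), i ≠ 0 → i ≠ 1 → ∀ j, A3 i j = A'' i j := by
        intro i hi0 hi1 j
        rw [hA3, Matrix.mul_apply]
        rw [Finset.sum_eq_single i (fun l _ hl => by simp [hW, hi0, hi1, Ne.symm hl])
          (fun h => absurd (Finset.mem_univ i) h)]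
        simp [hW, hi0, hi1]
      have hA30 : ∀ j, A3 0 j = u * A'' 0 j + (-v) * A'' 1 j := by
        intro j
        rw [hA3, Matrix.mul_apply,
          ← Finset.add_sum_erase _ _ (Finset.mem_univ (0 : Fin (k' + 2))),
          ← Finset.add_sum_erase _ _
            (Finset.mem_erase.mpr ⟨h10, Finset.mem_univ (1 : Fin (k' + 2))⟩)]
        have hrest : ∀ l ∈ (Finset.univ.erase (0 : Fin (k' + 2))).erase 1,
            W 0 l * A'' l j = 0 := by
          intro l hl
          have hl1 : l ≠ 1 := (Finset.mem_erase.mp hl).1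
          have hl0 : l ≠ 0 := (Finset.mem_erase.mp (Finset.mem_erase.mp hl).2).1
          simp [hW, hl0, hl1, Ne.symm hl0, Ne.symm hl1]
        rw [Finset.sum_eq_zero hrest, add_zero]
        have hW00 : W 0 0 = u := by simp [hW]
        have hW01 : W 0 1 = -v := by simp [hW, Ne.symm h10]
        rw [hW00, hW01]
      have hA31 : ∀ j, A3 1 j = (m : ℤ) * A'' 0 j + α * A'' 1 j := by
        intro j
        rw [hA3, Matrix.mul_apply,
          ← Finset.add_sum_erase _ _ (Finset.mem_univ (0 : Fin (k' + 2))),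
          ← Finset.add_sum_erase _ _
            (Finset.mem_erase.mpr ⟨h10, Finset.mem_univ (1 : Fin (k' + 2))⟩)]
        have hrest : ∀ l ∈ (Finset.univ.erase (0 : Fin (k' + 2))).erase 1,
            W 1 l * A'' l j = 0 := by
          intro l hl
          have hl1 : l ≠ 1 := (Finset.mem_erase.mp hl).1
          have hl0 : l ≠ 0 := (Finset.mem_erase.mp (Finset.mem_erase.mp hl).2).1
          simp [hW, hl0, hl1, Ne.symm hl0, Ne.symm hl1, h10]
        rw [Finset.sum_eq_zero hrest, add_zero]
        have hW10 : W 1 0 = (m : ℤ) := by simp [hW, h10]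
        have hW11 : W 1 1 = α := by simp [hW, h10]
        rw [hW10, hW11]
      have hA300 : ((A3 0 0 : ℤ) : ZMod m) = 1 := by
        have h1 : A3 0 0 = u * α + (-v) * A'' 1 0 := by rw [hA30 0, hA''00]
        rw [h1]
        push_cast
        rw [hA''col 1 h10]
        have h2 : ((u * α : ℤ) : ZMod m) = ((1 - v * (m : ℤ) : ℤ) : ZMod m) := by
          rw [show u * α = 1 - v * (m : ℤ) from by linarith [huv]]
        push_cast at h2
        rw [mul_zero, add_zero, h2, ZMod.natCast_self]
        ring
      have hA3col : ∀ i, i ≠ 0 → ((A3 i 0 : ℤ) : ZMod m) = 0 := by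
        intro i hi0
        by_cases hi1 : i = 1
        · subst hi1
          rw [hA31 0]
          push_cast
          rw [hA''col 1 h10, ZMod.natCast_self]
          ring
        · rw [hA3row i hi0 hi1 0]
          exact hA''col i hi0
      have hA3det : A3.det = A.det := by
        rw [hA3, Matrix.det_mul, hWdet, hA'', Matrix.det_mul, hE₂det, hA',
          Matrix.det_mul, hE₁det]
        ring
      -- the inner matrix
      set C : Matrix (Fin (k' + 1)) (Fin (k' + 1)) ℤ := A3.submatrix Fin.succ Fin.succ with hC
      have hCdet : ((C.det : ℤ) : ZMod m) = 1 := by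
        set X : Matrix (Fin (k' + 2)) (Fin (k' + 2)) (ZMod m) :=
          A3.map (Int.cast : ℤ → ZMod m) with hX
        have hXdet : X.det = 1 := by
          have h := RingHom.map_det (Int.castRingHom (ZMod m)) A3
          rw [RingHom.mapMatrix_apply] at h
          simp only [Int.coe_castRingHom] at h
          rw [hX, ← h, hA3det, hdet]
        have hXexp : X.det =
            X 0 0 * ((X.submatrix (Fin.succAbove (0 : Fin (k' + 2))) Fin.succ).det) := by
          rw [Matrix.det_succ_column_zero,
            Finset.sum_eq_single 0 (fun l _ hl => ?_) (fun h => absurd (Finset.mem_univ _) h)]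
          · simp
          · have : X l 0 = 0 := by
              rw [hX, Matrix.map_apply]
              exact hA3col l hl
            rw [this]
            ring
        have hX00 : X 0 0 = 1 := by
          rw [hX, Matrix.map_apply]
          exact hA300
        have hsub : X.submatrix (Fin.succAbove (0 : Fin (k' + 2))) Fin.succ =
            C.map (Int.cast : ℤ → ZMod m) := by
          rw [Fin.succAbove_zero]
          rfl
        have h := RingHom.map_det (Int.castRingHom (ZMod m)) C
        rw [RingHom.mapMatrix_apply] at h
        simp only [Int.coe_castRingHom] at h
        rw [h, ← hsub]
        rw [← hXdet, hXexp, hX00, one_mul]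
      obtain ⟨BC, hBC1, hBC2⟩ := IH C hCdet
      -- assemble the lift
      set B0 : Matrix (Fin (k' + 2)) (Fin (k' + 2)) ℤ :=
        Matrix.of fun i j =>
          Fin.cases (Fin.cases 1 (fun j2 => A3 0 (Fin.succ j2)) j)
            (fun i2 => Fin.cases 0 (fun j2 => BC i2 j2) j) i with hB0
      have hB000 : B0 0 0 = 1 := by simp [hB0]
      have hB00s : ∀ j2, B0 0 (Fin.succ j2) = A3 0 (Fin.succ j2) := by intro j2; simp [hB0]
      have hB0s0 : ∀ i2, B0 (Fin.succ i2) 0 = 0 := by intro i2; simp [hB0]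
      have hB0ss : ∀ i2 j2, B0 (Fin.succ i2) (Fin.succ j2) = BC i2 j2 := by
        intro i2 j2; simp [hB0]
      have hB0sub : B0.submatrix (Fin.succAbove (0 : Fin (k' + 2))) Fin.succ = BC := by
        rw [Fin.succAbove_zero]
        ext i2 j2
        rw [Matrix.submatrix_apply]
        exact hB0ss i2 j2
      have hB0det : B0.det = 1 := by
        rw [Matrix.det_succ_column_zero,
          Finset.sum_eq_single 0 (fun l _ hl => ?_) (fun h => absurd (Finset.mem_univ _) h)]
        · rw [hB0sub, hB000, hBC1]
          simp
        · rcases Fin.eq_zero_or_eq_succ l with rfl | ⟨l2, rfl⟩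
          · exact absurd rfl hl
          · rw [hB0s0 l2]
            ring
      refine lift_transfer (W * E₂ * E₁) A (by rw [Matrix.det_mul, Matrix.det_mul, hWdet, hE₂det, hE₁det]; ring) ⟨B0, hB0det, ?_⟩
      have hassoc : W * E₂ * E₁ * A = A3 := by
        rw [hA3, hA'', hA', mul_assoc, mul_assoc]
      rw [hassoc]
      ext i j
      rw [Matrix.map_apply, Matrix.map_apply]
      rcases Fin.eq_zero_or_eq_succ i with rfl | ⟨i2, rfl⟩
      · rcases Fin.eq_zero_or_eq_succ j with rfl | ⟨j2, rfl⟩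
        · rw [hB000, hA300]
          exact Int.cast_one
        · rw [hB00s j2]
      · rcases Fin.eq_zero_or_eq_succ j with rfl | ⟨j2, rfl⟩
        · rw [hB0s0 i2, hA3col (Fin.succ i2) (Fin.succ_ne_zero i2)]
          simp
        · rw [hB0ss i2 j2]
          have := congrFun (congrFun hBC2 i2) j2
          rw [Matrix.map_apply, Matrix.map_apply] at this
          rw [this, hC]
          rfl

private lemma matrix_nhds_key {p : ℕ} [Fact p.Prime] {n : ℕ}
    (x : Matrix (Fin n) (Fin n) ℤ_[p]) (V : Set (Matrix (Fin n) (Fin n) ℤ_[p]))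
    (hV : V ∈ nhds x) :
    ∃ k : ℕ, ∀ y : Matrix (Fin n) (Fin n) ℤ_[p],
      (∀ i j, PadicInt.toZModPow k (y i j) = PadicInt.toZModPow k (x i j)) → y ∈ V := by
  have norm_key : ∀ (k k' : ℕ), k' ≤ k → ∀ z w : ℤ_[p],
      PadicInt.toZModPow k z = PadicInt.toZModPow k w → ‖z - w‖ ≤ (p : ℝ) ^ (-(k' : ℤ)) := by
    intro k k' hk z w hzw
    rw [PadicInt.norm_le_pow_iff_mem_span_pow, ← PadicInt.ker_toZModPow, RingHom.mem_ker]
    have h1 : PadicInt.toZModPow k (z - w) = 0 := by rw [map_sub, hzw, sub_self]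
    have h2 := congrArg (ZMod.castHom (pow_dvd_pow p hk) (ZMod (p ^ k'))) h1
    rw [map_zero] at h2
    rw [← h2]
    exact (congrFun (congrArg (fun f => (DFunLike.coe f)) (PadicInt.zmod_cast_comp_toZModPow k' k hk)) (z - w)).symm
  replace hV := Filter.mem_pi.mp ((nhds_pi (a := (x : Fin n → Fin n → ℤ_[p]))).ge hV)
  obtain ⟨I, _, s, hs, hsub⟩ := hV
  have step : ∀ i : Fin n, ∃ k : ℕ, ∀ y : Fin n → ℤ_[p],
      (∀ j, PadicInt.toZModPow k (y j) = PadicInt.toZModPow k (x i j)) → y ∈ s i := by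
    intro i
    have hsi := hs i
    rw [nhds_pi, Filter.mem_pi] at hsi
    obtain ⟨J, _, u, hu, husub⟩ := hsi
    have step2 : ∀ j : Fin n, ∃ k : ℕ, ∀ z : ℤ_[p],
        PadicInt.toZModPow k z = PadicInt.toZModPow k (x i j) → z ∈ u j := by
      intro j
      obtain ⟨ε, hε, hball⟩ := Metric.mem_nhds_iff.mp (hu j)
      obtain ⟨k, hk⟩ := PadicInt.exists_pow_neg_lt p hε
      refine ⟨k, fun z hz => hball ?_⟩
      rw [Metric.mem_ball, dist_eq_norm]
      exact lt_of_le_of_lt (norm_key k k le_rfl z (x i j) hz) hk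
    choose k hk using step2
    refine ⟨Finset.univ.sup k, fun y hy => husub fun j _ => hk j (y j) ?_⟩
    have hle : k j ≤ Finset.univ.sup k := Finset.le_sup (Finset.mem_univ j)
    have := norm_key (Finset.univ.sup k) (k j) hle (y j) (x i j) (hy j)
    rw [PadicInt.norm_le_pow_iff_mem_span_pow, ← PadicInt.ker_toZModPow, RingHom.mem_ker,
      map_sub, sub_eq_zero] at this
    exact this
  choose k hk using step
  refine ⟨Finset.univ.sup k, fun y hy => hsub fun i _ => hk i (y i) fun j => ?_⟩
  have hle : k i ≤ Finset.univ.sup k := Finset.le_sup (Finset.mem_univ i)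
  have := norm_key (Finset.univ.sup k) (k i) hle (y i j) (x i j) (hy i j)
  rw [PadicInt.norm_le_pow_iff_mem_span_pow, ← PadicInt.ker_toZModPow, RingHom.mem_ker,
    map_sub, sub_eq_zero] at this
  exact this

instance natPrimesFact (p : Nat.Primes) : Fact (Nat.Prime (p : ℕ)) := ⟨p.2⟩

/-- `SL(n, ℤ_p)` with the topology induced from the `p`-adic topology on matrix entries. -/
noncomputable instance slPadicTopology (n : ℕ) (p : Nat.Primes) :
    TopologicalSpace (Matrix.SpecialLinearGroup (Fin n) ℤ_[(p : ℕ)]) :=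
  TopologicalSpace.induced
    (fun A => (A : Matrix (Fin n) (Fin n) ℤ_[(p : ℕ)])) inferInstance

/-- The diagonal embedding of `SL(n,ℤ)` in `∏_p SL(n,ℤ_p)` (product over all primes,
with the product topology) has dense image. -/
theorem sl_n_Z_denseRange_diagonal (n : ℕ) (hn : 2 ≤ n) :
    DenseRange (fun (A : Matrix.SpecialLinearGroup (Fin n) ℤ) (p : Nat.Primes) =>
      Matrix.SpecialLinearGroup.map (Int.castRingHom ℤ_[(p : ℕ)]) A) := by
  classical
  intro x
  rw [mem_closure_iff_nhds]
  intro N hN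
  rw [nhds_pi, Filter.mem_pi] at hN
  obtain ⟨I, hIfin, s, hs, hsub⟩ := hN
  -- for each prime, a sufficient level of congruence
  have key : ∀ p : Nat.Primes, ∃ k : ℕ,
      ∀ B : Matrix.SpecialLinearGroup (Fin n) ℤ_[(p : ℕ)],
        (∀ i j, PadicInt.toZModPow k ((B : Matrix (Fin n) (Fin n) ℤ_[(p : ℕ)]) i j) =
          PadicInt.toZModPow k ((x p : Matrix (Fin n) (Fin n) ℤ_[(p : ℕ)]) i j)) → B ∈ s p := by
    intro p
    have hsp := hs p
    rw [nhds_induced] at hsp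
    obtain ⟨V, hV, hVsub⟩ := hsp
    obtain ⟨k, hk⟩ := matrix_nhds_key (x p : Matrix (Fin n) (Fin n) ℤ_[(p : ℕ)]) V hV
    exact ⟨k, fun B hB => hVsub (hk _ hB)⟩
  choose k hk using key
  set F : Finset Nat.Primes := hIfin.toFinset with hF
  set K : ℕ := F.sup k with hK
  -- CRT on the entries
  have hent : ∀ i j : Fin n, ∃ a : ℤ, ∀ p ∈ F,
      (a : ZMod ((p : ℕ) ^ K)) =
        PadicInt.toZModPow K ((x p : Matrix (Fin n) (Fin n) ℤ_[(p : ℕ)]) i j) :=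
    fun i j => crt_primes K F _
  choose A hA using hent
  set A' : Matrix (Fin n) (Fin n) ℤ := Matrix.of A with hA'
  -- the determinant is 1 modulo each p^K
  have hdet : ∀ p ∈ F, ((A'.det : ℤ) : ZMod ((p : ℕ) ^ K)) = 1 := by
    intro p hp
    have h1 : A'.map (Int.cast : ℤ → ZMod ((p : ℕ) ^ K)) =
        (x p : Matrix (Fin n) (Fin n) ℤ_[(p : ℕ)]).map (PadicInt.toZModPow K) := by
      ext i j
      rw [Matrix.map_apply, Matrix.map_apply]
      exact hA i j p hp
    have h2 := RingHom.map_det (Int.castRingHom (ZMod ((p : ℕ) ^ K))) A'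
    rw [RingHom.mapMatrix_apply] at h2
    simp only [Int.coe_castRingHom] at h2
    have h3 := RingHom.map_det (PadicInt.toZModPow (p := (p : ℕ)) K)
      (x p : Matrix (Fin n) (Fin n) ℤ_[(p : ℕ)])
    rw [RingHom.mapMatrix_apply] at h3
    rw [h2, h1, ← h3, (x p).2, _root_.map_one]
  -- hence it is 1 modulo the product
  set m : ℕ := ∏ p ∈ F, (p : ℕ) ^ K with hq
  have hm : m ≠ 0 := by
    rw [hq]
    exact Finset.prod_ne_zero_iff.mpr fun p _ => pow_ne_zero K p.2.pos.ne'
  have hdetm : ((A'.det : ℤ) : ZMod m) = 1 := by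
    have hdvd : ((m : ℕ) : ℤ) ∣ A'.det - 1 := by
      have : ((m : ℕ) : ℤ) = ∏ p ∈ F, ((p : ℕ) ^ K : ℤ) := by
        rw [hq]; push_cast; rfl
      rw [this]
      refine Finset.prod_dvd_of_coprime ?_ ?_
      · intro p hp q hq' hpq
        have hpq' : (p : ℕ) ≠ (q : ℕ) := fun h => hpq (Nat.Primes.coe_nat_injective h)
        have : IsCoprime ((p : ℕ) : ℤ) ((q : ℕ) : ℤ) :=
          Nat.isCoprime_iff_coprime.mpr ((Nat.coprime_primes p.2 q.2).mpr hpq')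
        exact (this.pow : IsCoprime (((p : ℕ) : ℤ) ^ K) (((q : ℕ) : ℤ) ^ K))
      · intro p hp
        have := hdet p hp
        have h0 : ((A'.det - 1 : ℤ) : ZMod ((p : ℕ) ^ K)) = 0 := by
          push_cast [this]
          ring
        have := (ZMod.intCast_zmod_eq_zero_iff_dvd _ ((p : ℕ) ^ K)).mp h0
        push_cast at this ⊢
        exact this
    have h0 : ((A'.det - 1 : ℤ) : ZMod m) = 0 :=
      (ZMod.intCast_zmod_eq_zero_iff_dvd _ m).mpr hdvd
    rw [Int.cast_sub, Int.cast_one] at h0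
    linear_combination h0
  -- lift to an integer matrix of determinant one
  obtain ⟨B, hB1, hB2⟩ := lift_det_one m hm n A' hdetm
  set BSL : Matrix.SpecialLinearGroup (Fin n) ℤ := ⟨B, hB1⟩ with hBSL
  refine ⟨_, ?_, Set.mem_range_self BSL⟩
  apply hsub
  intro p hpI
  have hpF : p ∈ F := hIfin.mem_toFinset.mpr hpI
  apply hk p
  intro i j
  -- entries of the image of BSL at p
  have e1 : ((Matrix.SpecialLinearGroup.map (Int.castRingHom ℤ_[(p : ℕ)]) BSL :
      Matrix (Fin n) (Fin n) ℤ_[(p : ℕ)]) i j) = ((B i j : ℤ) : ℤ_[(p : ℕ)]) := rfl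
  rw [e1]
  have e2 : PadicInt.toZModPow (p := (p : ℕ)) K ((B i j : ℤ) : ℤ_[(p : ℕ)]) =
      ((B i j : ℤ) : ZMod ((p : ℕ) ^ K)) := map_intCast _ _
  -- congruence between B and A' modulo p^K
  have e3 : ((B i j : ℤ) : ZMod ((p : ℕ) ^ K)) = ((A' i j : ℤ) : ZMod ((p : ℕ) ^ K)) := by
    have hdvd : ((p : ℕ) ^ K) ∣ m := by
      rw [hq]; exact Finset.dvd_prod_of_mem _ hpF
    have := congrFun (congrFun hB2 i) j
    rw [Matrix.map_apply, Matrix.map_apply] at this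
    have h4 := congrArg (ZMod.castHom hdvd (ZMod ((p : ℕ) ^ K))) this
    rw [map_intCast, map_intCast] at h4
    exact h4
  -- relate levels K and k p
  have hkK : k p ≤ K := Finset.le_sup hpF
  have e4 : ∀ z : ℤ_[(p : ℕ)], PadicInt.toZModPow (k p) z =
      ZMod.castHom (pow_dvd_pow (p : ℕ) hkK) (ZMod ((p : ℕ) ^ (k p)))
        (PadicInt.toZModPow K z) := fun z =>
    (congrFun (congrArg (fun f => (DFunLike.coe f))
      (PadicInt.zmod_cast_comp_toZModPow (k p) K hkK)) z).symm
  rw [e4, e4, e2, e3]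
  congr 1
  exact hA i j p hpF
end
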